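/- Under the conditions (Bx,x)=1 and (Bx,y)=0, the z-derivative of Φ_z(x,y) at z = 0 equals the Joachimsthal quantity: dΦ_z(x,y)/dz |_{z=0} = |Bx|^2 (By,y), and this equals −Σ_{k=0}^n a_k^{-2} F_k(x,y). -/

import Mathlib

/-- Under (Bx,x)=1 and (Bx,y)=0 (B = A⁻¹), the derivative of Φ_z(x,y) at z=0
equals |Bx|²(By,y), which equals −Σ a_k⁻² F_k(x,y). -/
theorem deriv_phi_at_zero (n : ℕ) (a : Fin (n+1) → ℝ)
    (ha : Function.Injective a) (ha0 : ∀ k, a k ≠ 0)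
    (x y : Fin (n+1) → ℝ)
    (hx : ∑ k, x k * x k / a k = 1)
    (hxy : ∑ k, x k * y k / a k = 0) :
    deriv (fun z => (1 + ∑ i, x i * x i / (z - a i)) * (∑ i, y i * y i / (z - a i)) -
        (∑ i, x i * y i / (z - a i))^2) 0 =
      (∑ k, (x k / a k)^2) * (∑ k, y k * y k / a k) ∧
    (∑ k, (x k / a k)^2) * (∑ k, y k * y k / a k) =
      -∑ k, (y k^2 + ∑ j ∈ Finset.univ \ {k}, (x k * y j - x j * y k)^2 / (a k - a j))
        / (a k)^2 := by
  -- basic derivative facts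
  have key : ∀ (u v : Fin (n+1) → ℝ) (i : Fin (n+1)),
      HasDerivAt (fun z : ℝ => u i * v i / (z - a i)) (-(u i * v i) / (a i)^2) 0 := by
    intro u v i
    have h1 : HasDerivAt (fun z : ℝ => z - a i) 1 0 := (hasDerivAt_id 0).sub_const _
    have hne : (0:ℝ) - a i ≠ 0 := by simpa using ha0 i
    have h3 := (h1.inv hne).const_mul (u i * v i)
    have hval : u i * v i * (-1 / (((0:ℝ) - a i) ^ 2)) = -(u i * v i) / (a i)^2 := by
      rw [zero_sub, neg_sq]; ring
    rw [hval] at h3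
    simpa [div_eq_mul_inv] using h3
  have sumD : ∀ (u v : Fin (n+1) → ℝ),
      HasDerivAt (fun z : ℝ => ∑ i, u i * v i / (z - a i)) (∑ i, -(u i * v i) / (a i)^2) 0 :=
    fun u v => HasDerivAt.fun_sum (fun i _ => key u v i)
  have val0 : ∀ (u v : Fin (n+1) → ℝ),
      ∑ i, u i * v i / ((0:ℝ) - a i) = -∑ i, u i * v i / a i := by
    intro u v
    rw [← Finset.sum_neg_distrib]
    exact Finset.sum_congr rfl fun i _ => by rw [zero_sub, div_neg]
  constructor
  · have H := ((((sumD x x).const_add 1).mul (sumD y y)).sub ((sumD x y).pow 2))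
    refine H.deriv.trans ?_
    have e1 : (∑ i, -(x i * x i) / (a i)^2) = -∑ k, (x k / a k)^2 := by
      rw [← Finset.sum_neg_distrib]
      exact Finset.sum_congr rfl fun i _ => by rw [div_pow]; ring
    rw [val0 x x, val0 y y, val0 x y, hx, hxy, e1]
    push_cast
    ring
  · -- the algebraic identity
    have hane : ∀ k j : Fin (n+1), j ≠ k → a k - a j ≠ 0 := by
      intro k j h
      exact sub_ne_zero.mpr fun hc => h ((ha hc).symm)
    -- swap lemma for off-diagonal double sums
    have swap : ∀ f : Fin (n+1) → Fin (n+1) → ℝ,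
        (∑ k, ∑ j ∈ Finset.univ \ {k}, f k j) = ∑ k, ∑ j ∈ Finset.univ \ {k}, f j k := by
      intro f
      exact Finset.sum_comm' (s' := fun j => Finset.univ \ {j}) (t' := Finset.univ)
        (by intro k j; simp [ne_comm])
    have hf : ∀ (F : Fin (n+1) → Fin (n+1) → ℝ),
        (∑ k, ∑ j ∈ Finset.univ \ {k}, F k j) + (∑ k, ∑ j ∈ Finset.univ \ {k}, F k j)
        = ∑ k, ∑ j ∈ Finset.univ \ {k}, (F k j + F j k) := by
      intro F
      nth_rewrite 2 [swap F]
      rw [← Finset.sum_add_distrib]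
      exact Finset.sum_congr rfl fun k _ => (Finset.sum_add_distrib).symm
    have double : ∀ f g : Fin (n+1) → Fin (n+1) → ℝ,
        (∀ k j, j ≠ k → f k j + f j k = -(g k j + g j k)) →
        (∑ k, ∑ j ∈ Finset.univ \ {k}, f k j) = -∑ k, ∑ j ∈ Finset.univ \ {k}, g k j := by
      intro f g h
      have key2 : (∑ k, ∑ j ∈ Finset.univ \ {k}, (f k j + f j k))
          = -∑ k, ∑ j ∈ Finset.univ \ {k}, (g k j + g j k) := by
        rw [← Finset.sum_neg_distrib]
        refine Finset.sum_congr rfl fun k _ => ?_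
        rw [← Finset.sum_neg_distrib]
        refine Finset.sum_congr rfl fun j hj => ?_
        exact h k j (Finset.notMem_singleton.mp (Finset.mem_sdiff.mp hj).2)
      have h1 := hf f
      have h2 := hf g
      rw [key2, ← h2] at h1
      linarith
    -- Step A : split the right-hand side
    have stepA : (∑ k, (y k^2 + ∑ j ∈ Finset.univ \ {k}, (x k * y j - x j * y k)^2 / (a k - a j))
          / (a k)^2)
        = (∑ k, y k^2 / (a k)^2)
          + ∑ k, ∑ j ∈ Finset.univ \ {k},
              (x k * y j - x j * y k)^2 / ((a k - a j) * (a k)^2) := by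
      rw [← Finset.sum_add_distrib]
      refine Finset.sum_congr rfl fun k _ => ?_
      rw [add_div, Finset.sum_div]
      congr 1
      exact Finset.sum_congr rfl fun j _ => by rw [div_div]
    -- Step B : antisymmetrization
    have stepB : (∑ k, ∑ j ∈ Finset.univ \ {k},
          (x k * y j - x j * y k)^2 / ((a k - a j) * (a k)^2))
        = -∑ k, ∑ j ∈ Finset.univ \ {k},
            (x k * y j - x j * y k)^2 / (a k * (a j)^2) := by
      refine double _ _ ?_
      intro k j hjk
      have h1 : a k - a j ≠ 0 := hane k j hjk
      have h2 : a j - a k ≠ 0 := hane j k (Ne.symm hjk)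
      have h3 := ha0 k
      have h4 := ha0 j
      field_simp
      ring
    -- Step C : extend inner sum to all indices
    have stepC : (∑ k, ∑ j ∈ Finset.univ \ {k},
          (x k * y j - x j * y k)^2 / (a k * (a j)^2))
        = ∑ k, ∑ j, (x k * y j - x j * y k)^2 / (a k * (a j)^2) := by
      refine Finset.sum_congr rfl fun k _ => ?_
      apply Finset.sum_subset Finset.sdiff_subset
      intro j _ hj
      have hjk : j = k := by simpa using hj
      subst hjk
      simp
    -- Step D : expand the full double sum
    have stepD : (∑ k, ∑ j, (x k * y j - x j * y k)^2 / (a k * (a j)^2))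
        = (∑ k, x k * x k / a k) * (∑ j, y j * y j / (a j)^2)
          - 2 * (∑ k, x k * y k / a k) * (∑ j, x j * y j / (a j)^2)
          + (∑ k, y k * y k / a k) * (∑ j, x j * x j / (a j)^2) := by
      have e : ∀ k j : Fin (n+1), (x k * y j - x j * y k)^2 / (a k * (a j)^2)
          = (x k * x k / a k) * (y j * y j / (a j)^2)
            - (2 * (x k * y k / a k)) * (x j * y j / (a j)^2)
            + (y k * y k / a k) * (x j * x j / (a j)^2) := by
        intro k j
        have h3 := ha0 k
        have h4 := ha0 j
        field_simp
        ring
      calc (∑ k, ∑ j, (x k * y j - x j * y k)^2 / (a k * (a j)^2))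
          = ∑ k, ((x k * x k / a k) * (∑ j, y j * y j / (a j)^2)
              - (2 * (x k * y k / a k)) * (∑ j, x j * y j / (a j)^2)
              + (y k * y k / a k) * (∑ j, x j * x j / (a j)^2)) := by
            refine Finset.sum_congr rfl fun k _ => ?_
            rw [Finset.mul_sum, Finset.mul_sum, Finset.mul_sum,
              ← Finset.sum_sub_distrib, ← Finset.sum_add_distrib]
            exact Finset.sum_congr rfl fun j _ => e k j
        _ = _ := by
            rw [Finset.sum_add_distrib, Finset.sum_sub_distrib,
              ← Finset.sum_mul, ← Finset.sum_mul, ← Finset.sum_mul,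
              ← Finset.mul_sum]
    -- put everything together
    have ey : (∑ k, y k^2 / (a k)^2) = ∑ j, y j * y j / (a j)^2 :=
      Finset.sum_congr rfl fun k _ => by rw [pow_two]
    have ex : (∑ k, (x k / a k)^2) = ∑ j, x j * x j / (a j)^2 :=
      Finset.sum_congr rfl fun k _ => by rw [div_pow, pow_two]
    rw [stepA, stepB, stepC, stepD, hx, hxy, ey, ex]
    ring
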